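/- Every nonnegative, nontrivial C² solution u of u'' + 2λ u ln u = 0 on ℝ with u(±∞) = 0 is a translate of the Gaussian φ(x) = e^{1/2} e^{-λx²/2}; that is, there exists x₀ ∈ ℝ such that u(x) = exp(1/2 − λ(x−x₀)²/2) for all x. -/

import Mathlib

open Filter Set Topology

private lemma g_hasDeriv' (y : ℝ) :
    HasDerivAt (fun t : ℝ => t ^ 2 * (Real.log t - 1 / 2)) (2 * y * Real.log y) y := by
  rcases eq_or_ne y 0 with rfl | hy
  · rw [hasDerivAt_iff_tendsto_slope]
    have hc : Continuous fun h : ℝ => h * Real.log h - h / 2 :=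
      Real.continuous_mul_log.sub (continuous_id.div_const 2)
    have h1 : Tendsto (fun h : ℝ => h * Real.log h - h / 2) (𝓝[≠] (0:ℝ)) (𝓝 0) := by
      have := (hc.tendsto 0).mono_left (nhdsWithin_le_nhds (s := {(0:ℝ)}ᶜ))
      simpa using this
    have h0 : 2 * (0:ℝ) * Real.log 0 = 0 := by simp
    rw [h0]
    refine Tendsto.congr' ?_ h1
    filter_upwards [self_mem_nhdsWithin] with h hh
    simp only [Set.mem_compl_iff, Set.mem_singleton_iff] at hh
    rw [slope_def_field]
    field_simp
    ring
  · have h1 : HasDerivAt Real.log y⁻¹ y := Real.hasDerivAt_log hy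
    have h2 : HasDerivAt (fun t : ℝ => t ^ 2) (2 * y) y := by
      simpa using (hasDerivAt_pow 2 y)
    have := h2.mul (h1.sub_const (1 / 2))
    convert this using 1
    any_goals rfl
    field_simp
    ring

theorem steady_state_uniqueness (lam : ℝ) (hlam : 0 < lam)
    (u : ℝ → ℝ) (hu : ContDiff ℝ 2 u) (hnonneg : ∀ x, 0 ≤ u x)
    (hnontriv : ∃ x, u x ≠ 0)
    (heq : ∀ x, deriv (deriv u) x + 2 * lam * u x * Real.log (u x) = 0)
    (hutop : Tendsto u atTop (nhds 0)) (hubot : Tendsto u atBot (nhds 0)) :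
    ∃ x₀ : ℝ, ∀ x, u x = Real.exp (1 / 2 - lam * (x - x₀) ^ 2 / 2) := by
  have hd1 : Differentiable ℝ u := hu.differentiable (by norm_num)
  have hcd1 : ContDiff ℝ 1 (deriv u) := by
    have h2 : ContDiff ℝ ((1 : ℕ) + 1) u := by exact_mod_cast hu
    exact (contDiff_succ_iff_deriv.mp h2).2.2
  have hd2 : Differentiable ℝ (deriv u) := hcd1.differentiable one_ne_zero
  have hc1 : Continuous (deriv u) := hd2.continuous
  have hcu : Continuous u := hd1.continuous
  have hder : ∀ x, HasDerivAt u (deriv u x) x := fun x => (hd1 x).hasDerivAt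
  have hder2 : ∀ x, HasDerivAt (deriv u) (deriv (deriv u) x) x := fun x => (hd2 x).hasDerivAt
  set E : ℝ → ℝ := fun x => (deriv u x) ^ 2 / 2 + lam * ((u x) ^ 2 * (Real.log (u x) - 1 / 2))
    with hEdef
  have hE : ∀ x, HasDerivAt E 0 x := by
    intro x
    have h1 : HasDerivAt (fun y => (deriv u y) ^ 2 / 2) (deriv u x * deriv (deriv u) x) x := by
      have := ((hder2 x).pow 2).div_const 2
      convert this using 1
      any_goals rfl
      ring
    have h2 : HasDerivAt (fun y => lam * ((u y) ^ 2 * (Real.log (u y) - 1 / 2)))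
        (lam * (2 * u x * Real.log (u x) * deriv u x)) x := by
      have := ((g_hasDeriv' (u x)).comp x (hder x)).const_mul lam
      convert this using 1
      any_goals rfl
    have h3 : deriv (deriv u) x = -(2 * lam * u x * Real.log (u x)) := by linarith [heq x]
    have := h1.add h2
    convert this using 1
    any_goals rfl
    rw [h3]; ring
  have hEc : ∀ x, E x = E 0 :=
    fun x => is_const_of_deriv_eq_zero (fun y => (hE y).differentiableAt)
      (fun y => (hE y).deriv) x 0
  have hGcont : Continuous fun y : ℝ => lam * (y ^ 2 * (Real.log y - 1 / 2)) := by
    have hfe : (fun y : ℝ => y ^ 2 * (Real.log y - 1 / 2))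
        = fun y : ℝ => y * (y * Real.log y) - y ^ 2 / 2 := by
      funext y; ring
    exact continuous_const.mul (hfe ▸ ((continuous_id.mul Real.continuous_mul_log).sub
      ((continuous_pow 2).div_const 2)))
  have hE00 : E 0 = 0 := by
    have hGu : Tendsto (fun x => lam * ((u x) ^ 2 * (Real.log (u x) - 1 / 2))) atTop (𝓝 0) := by
      have := (hGcont.tendsto 0).comp hutop
      simp at this ⊢; exact this
    have hEt : Tendsto E atTop (𝓝 (E 0)) := by
      have : E = fun _ => E 0 := funext hEc
      rw [this]; exact tendsto_const_nhds
    have hu'sq : Tendsto (fun x => (deriv u x) ^ 2 / 2) atTop (𝓝 (E 0)) := by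
      have := hEt.sub hGu
      simp only [sub_zero] at this
      refine this.congr fun x => ?_
      simp only [hEdef]; ring
    have hc0 : 0 ≤ E 0 := ge_of_tendsto' hu'sq fun x => by positivity
    clear hEdef
    clear_value E
    by_contra hne
    have hcpos : 0 < E 0 := lt_of_le_of_ne hc0 (Ne.symm hne)
    have hev : ∀ᶠ x in atTop, E 0 / 2 < (deriv u x) ^ 2 / 2 :=
      hu'sq.eventually_const_lt (half_lt_self hcpos)
    obtain ⟨X, hX⟩ := eventually_atTop.mp hev
    set s := Real.sqrt (E 0) with hsdef
    have hs : 0 < s := Real.sqrt_pos.mpr hcpos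
    have hne0 : ∀ x, X ≤ x → deriv u x ≠ 0 := by
      intro x hx h
      have := hX x hx
      rw [h] at this
      norm_num at this
      exact absurd this (not_lt.mpr (half_pos hcpos).le)
    rcases (hne0 X le_rfl).lt_or_gt with hneg | hpos
    · -- u' X < 0
      have hall : ∀ x, X ≤ x → deriv u x < 0 := by
        intro x hx
        by_contra hle
        push_neg at hle
        obtain ⟨z, hz, hz0⟩ := intermediate_value_Icc hx hc1.continuousOn
          (⟨hneg.le, hle⟩ : (0:ℝ) ∈ Icc (deriv u X) (deriv u x))
        exact hne0 z hz.1 hz0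
      have hges : ∀ x, X ≤ x → deriv u x ≤ -s := by
        intro x hx
        have h1 : E 0 < (deriv u x) ^ 2 := by linarith [hX x hx]
        have h2 : s ≤ |deriv u x| := by
          rw [← Real.sqrt_sq_eq_abs]
          exact Real.sqrt_le_sqrt h1.le
        rw [abs_of_neg (hall x hx)] at h2
        linarith
      have hda : ∀ x : ℝ, HasDerivAt (fun y => u y + s * y) (deriv u x + s) x := by
        intro x
        have h1 : HasDerivAt (fun y : ℝ => s * y) s x := by
          simpa using (hasDerivAt_id x).const_mul s
        exact (hder x).add h1
      have hanti : AntitoneOn (fun x => u x + s * x) (Ici X) := by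
        apply antitoneOn_of_deriv_nonpos (convex_Ici X) ?_ ?_ ?_
        · exact fun x _ => ((hda x).differentiableAt).continuousAt.continuousWithinAt
        · intro x hx
          exact (hda x).differentiableAt.differentiableWithinAt
        · intro x hx
          rw [interior_Ici] at hx
          rw [(hda x).deriv]
          linarith [hges x (le_of_lt hx)]
      set x1 := max X ((u X + s * X) / s + 1) with hx1def
      have hx1X : X ≤ x1 := le_max_left _ _
      have hkey : u x1 + s * x1 ≤ u X + s * X :=
        hanti (self_mem_Ici) hx1X hx1X
      have hx1b : (u X + s * X) / s + 1 ≤ x1 := le_max_right _ _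
      have : u X + s * X + s ≤ s * x1 := by
        have := mul_le_mul_of_nonneg_left hx1b hs.le
        rw [mul_add, mul_one, mul_div_cancel₀ _ hs.ne'] at this
        linarith
      linarith [hnonneg x1]
    · -- 0 < u' X
      have hall : ∀ x, X ≤ x → 0 < deriv u x := by
        intro x hx
        by_contra hle
        push_neg at hle
        obtain ⟨z, hz, hz0⟩ := intermediate_value_Icc' hx hc1.continuousOn
          (⟨hle, hpos.le⟩ : (0:ℝ) ∈ Icc (deriv u x) (deriv u X))
        exact hne0 z hz.1 hz0
      have hges : ∀ x, X ≤ x → s ≤ deriv u x := by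
        intro x hx
        have h1 : E 0 < (deriv u x) ^ 2 := by linarith [hX x hx]
        have h2 : s ≤ |deriv u x| := by
          rw [← Real.sqrt_sq_eq_abs]
          exact Real.sqrt_le_sqrt h1.le
        rwa [abs_of_pos (hall x hx)] at h2
      have hda : ∀ x : ℝ, HasDerivAt (fun y => u y - s * y) (deriv u x - s) x := by
        intro x
        have h1 : HasDerivAt (fun y : ℝ => s * y) s x := by
          simpa using (hasDerivAt_id x).const_mul s
        exact (hder x).sub h1
      have hmono : MonotoneOn (fun x => u x - s * x) (Ici X) := by
        apply monotoneOn_of_deriv_nonneg (convex_Ici X) ?_ ?_ ?_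
        · exact fun x _ => ((hda x).differentiableAt).continuousAt.continuousWithinAt
        · intro x hx
          exact (hda x).differentiableAt.differentiableWithinAt
        · intro x hx
          rw [interior_Ici] at hx
          rw [(hda x).deriv]
          linarith [hges x (le_of_lt hx)]
      have hkey : ∀ x, X ≤ x → u X - s * X + s * x ≤ u x := by
        intro x hx
        have := hmono self_mem_Ici hx hx
        simp only at this
        linarith
      have hgrow : Tendsto (fun x => u X - s * X + s * x) atTop atTop :=
        tendsto_atTop_add_const_left _ _ (tendsto_id.const_mul_atTop hs)
      have hua : Tendsto u atTop atTop :=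
        tendsto_atTop_mono' atTop (eventually_atTop.mpr ⟨X, hkey⟩) hgrow
      exact not_tendsto_nhds_of_tendsto_atTop hua 0 hutop
  have hE0 : ∀ x, (deriv u x) ^ 2 = 2 * lam * ((u x) ^ 2 * (1 / 2 - Real.log (u x))) := by
    intro x
    have h := hEc x
    rw [hE00] at h
    simp only [hEdef] at h
    linear_combination 2 * h
  have hq : ∀ x, u x ≠ 0 → HasDerivAt (fun y => deriv u y / u y) (-lam) x := by
    intro x hx
    have h := (hder2 x).div (hder x) hx
    convert h using 1
    any_goals rfl
    have h2 := heq x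
    have h3 := hE0 x
    rw [eq_div_iff (pow_ne_zero 2 hx)]
    linear_combination (-(u x)) * h2 + h3
  -- constancy helper on open intervals
  have hconst : ∀ (c d : ℝ) (f : ℝ → ℝ), (∀ x ∈ Ioo c d, HasDerivAt f 0 x) →
      ∀ x ∈ Ioo c d, ∀ y ∈ Ioo c d, f x = f y := by
    intro c d f hf
    have hmono : MonotoneOn f (Ioo c d) := by
      apply monotoneOn_of_deriv_nonneg (convex_Ioo c d) ?_ ?_ ?_
      · exact fun x hx => (hf x hx).differentiableAt.continuousAt.continuousWithinAt
      · intro x hx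
        rw [interior_Ioo] at hx
        exact (hf x hx).differentiableAt.differentiableWithinAt
      · intro x hx
        rw [interior_Ioo] at hx
        rw [(hf x hx).deriv]
    have hanti : AntitoneOn f (Ioo c d) := by
      apply antitoneOn_of_deriv_nonpos (convex_Ioo c d) ?_ ?_ ?_
      · exact fun x hx => (hf x hx).differentiableAt.continuousAt.continuousWithinAt
      · intro x hx
        rw [interior_Ioo] at hx
        exact (hf x hx).differentiableAt.differentiableWithinAt
      · intro x hx
        rw [interior_Ioo] at hx
        rw [(hf x hx).deriv]
    intro x hx y hy
    rcases le_total x y with hle | hle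
    · exact le_antisymm (hmono hx hy hle) (hanti hx hy hle)
    · exact (le_antisymm (hmono hy hx hle) (hanti hy hx hle)).symm
  -- derivative of log ∘ u
  have hvd : ∀ x, u x ≠ 0 → HasDerivAt (fun y => Real.log (u y)) (deriv u x / u x) x := by
    intro x hx
    have := (Real.hasDerivAt_log hx).comp x (hder x)
    simp [div_eq_mul_inv, mul_comm] at this ⊢; exact this
  -- derivative of the quadratic
  have hquadd : ∀ (C : ℝ) (x : ℝ),
      HasDerivAt (fun y : ℝ => C * y - lam * y ^ 2 / 2) (C - lam * x) x := by
    intro C x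
    have hA : HasDerivAt (fun y : ℝ => C * y) C x := by
      simpa using (hasDerivAt_id x).const_mul C
    have hB : HasDerivAt (fun y : ℝ => lam * y ^ 2 / 2) (lam * x) x := by
      have := ((hasDerivAt_pow 2 x).const_mul lam).div_const 2
      convert this using 1
      any_goals rfl
      ring
    exact hA.sub hB
  -- core lemma: u cannot vanish at a finite endpoint of a positivity interval
  have core : ∀ c d : ℝ, c < d → (∀ x ∈ Ioo c d, 0 < u x) → (u c = 0 ∨ u d = 0) → False := by
    intro c d hcd hupos hend
    have hqd : ∀ x ∈ Ioo c d, HasDerivAt (fun y => deriv u y / u y) (-lam) x :=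
      fun x hx => hq x (hupos x hx).ne'
    have hrd : ∀ x ∈ Ioo c d, HasDerivAt (fun y => deriv u y / u y + lam * y) 0 x := by
      intro x hx
      have h1 : HasDerivAt (fun y : ℝ => lam * y) lam x := by
        simpa using (hasDerivAt_id x).const_mul lam
      have := (hqd x hx).add h1
      simp at this ⊢; exact this
    have hm : (c + d) / 2 ∈ Ioo c d := ⟨by linarith, by linarith⟩
    obtain ⟨m, hmdef⟩ : ∃ m, m = (c + d) / 2 := ⟨_, rfl⟩
    rw [← hmdef] at hm
    obtain ⟨C, hCdef⟩ : ∃ C, C = deriv u m / u m + lam * m := ⟨_, rfl⟩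
    have hqf : ∀ x ∈ Ioo c d, deriv u x / u x = C - lam * x := by
      intro x hx
      have := hconst c d _ hrd x hx m hm
      rw [hCdef]
      linarith
    have hDd : ∀ x ∈ Ioo c d,
        HasDerivAt (fun y => Real.log (u y) - (C * y - lam * y ^ 2 / 2)) 0 x := by
      intro x hx
      have := (hvd x (hupos x hx).ne').sub (hquadd C x)
      rw [hqf x hx] at this
      simp at this ⊢; exact this
    obtain ⟨K, hKdef⟩ : ∃ K, K = Real.log (u m) - (C * m - lam * m ^ 2 / 2) := ⟨_, rfl⟩
    have hvf : ∀ x ∈ Ioo c d, Real.log (u x) = K + (C * x - lam * x ^ 2 / 2) := by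
      intro x hx
      have := hconst c d _ hDd x hx m hm
      rw [hKdef]
      linarith
    have hpolyc : Continuous fun x : ℝ => K + (C * x - lam * x ^ 2 / 2) :=
      continuous_const.add ((continuous_const.mul continuous_id).sub
        ((continuous_const.mul (continuous_pow 2)).div_const 2))
    rcases hend with he | he
    · have hIol : Ioo c d ∈ 𝓝[>] c := Ioo_mem_nhdsGT_of_mem ⟨le_rfl, hcd⟩
      have hu0 : Tendsto u (𝓝[>] c) (𝓝 0) := by
        have := (hcu.tendsto c).mono_left (nhdsWithin_le_nhds (s := Ioi c))
        rwa [he] at this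
      have hulog : Tendsto u (𝓝[>] c) (𝓝[≠] (0 : ℝ)) := by
        rw [tendsto_nhdsWithin_iff]
        refine ⟨hu0, ?_⟩
        filter_upwards [hIol] with x hx
        exact (hupos x hx).ne'
      have hvbot : Tendsto (fun x => Real.log (u x)) (𝓝[>] c) atBot :=
        Real.tendsto_log_nhdsNE_zero.comp hulog
      have hvten : Tendsto (fun x => Real.log (u x)) (𝓝[>] c)
          (𝓝 (K + (C * c - lam * c ^ 2 / 2))) := by
        refine Tendsto.congr' ?_ ((hpolyc.tendsto c).mono_left (nhdsWithin_le_nhds (s := Ioi c)))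
        filter_upwards [hIol] with x hx
        exact (hvf x hx).symm
      exact not_tendsto_atBot_of_tendsto_nhds hvten hvbot
    · have hIol : Ioo c d ∈ 𝓝[<] d := Ioo_mem_nhdsLT_of_mem ⟨hcd, le_rfl⟩
      have hu0 : Tendsto u (𝓝[<] d) (𝓝 0) := by
        have := (hcu.tendsto d).mono_left (nhdsWithin_le_nhds (s := Iio d))
        rwa [he] at this
      have hulog : Tendsto u (𝓝[<] d) (𝓝[≠] (0 : ℝ)) := by
        rw [tendsto_nhdsWithin_iff]
        refine ⟨hu0, ?_⟩
        filter_upwards [hIol] with x hx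
        exact (hupos x hx).ne'
      have hvbot : Tendsto (fun x => Real.log (u x)) (𝓝[<] d) atBot :=
        Real.tendsto_log_nhdsNE_zero.comp hulog
      have hvten : Tendsto (fun x => Real.log (u x)) (𝓝[<] d)
          (𝓝 (K + (C * d - lam * d ^ 2 / 2))) := by
        refine Tendsto.congr' ?_ ((hpolyc.tendsto d).mono_left (nhdsWithin_le_nhds (s := Iio d)))
        filter_upwards [hIol] with x hx
        exact (hvf x hx).symm
      exact not_tendsto_atBot_of_tendsto_nhds hvten hvbot
  -- positivity of u
  have hpos : ∀ x, 0 < u x := by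
    by_contra hcon
    push_neg at hcon
    obtain ⟨a, ha⟩ := hcon
    have ha0 : u a = 0 := le_antisymm ha (hnonneg a)
    obtain ⟨b, hb⟩ := hnontriv
    have hbpos : 0 < u b := (hnonneg b).lt_of_ne (Ne.symm hb)
    have hab : a ≠ b := fun h => hb (h ▸ ha0)
    rcases hab.lt_or_gt with hlt | hlt
    · set T := {x | u x = 0} ∩ Icc a b with hT
      have hTc : IsClosed T := (isClosed_eq hcu continuous_const).inter isClosed_Icc
      have haT : a ∈ T := ⟨ha0, le_rfl, hlt.le⟩
      have hTb : BddAbove T := BddAbove.mono inter_subset_right bddAbove_Icc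
      set α := sSup T with hαdef
      have hαT : α ∈ T := hTc.csSup_mem ⟨a, haT⟩ hTb
      have hα0 : u α = 0 := hαT.1
      have hαb : α < b := lt_of_le_of_ne hαT.2.2 fun h' => hb (h' ▸ hα0)
      have hpos' : ∀ x ∈ Ioo α b, 0 < u x := by
        intro x hx
        rcases (hnonneg x).lt_or_eq with h' | h'
        · exact h'
        · exfalso
          have haα : a ≤ α := le_csSup hTb haT
          have hxT : x ∈ T := ⟨h'.symm, le_trans haα hx.1.le, hx.2.le⟩
          exact absurd (le_csSup hTb hxT) (not_le.mpr hx.1)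
      exact core α b hαb hpos' (Or.inl hα0)
    · set T := {x | u x = 0} ∩ Icc b a with hT
      have hTc : IsClosed T := (isClosed_eq hcu continuous_const).inter isClosed_Icc
      have haT : a ∈ T := ⟨ha0, hlt.le, le_rfl⟩
      have hTb : BddBelow T := BddBelow.mono inter_subset_right bddBelow_Icc
      set β := sInf T with hβdef
      have hβT : β ∈ T := hTc.csInf_mem ⟨a, haT⟩ hTb
      have hβ0 : u β = 0 := hβT.1
      have hbβ : b < β := lt_of_le_of_ne hβT.2.1 fun h' => hb (by rw [h']; exact hβ0)
      have hpos' : ∀ x ∈ Ioo b β, 0 < u x := by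
        intro x hx
        rcases (hnonneg x).lt_or_eq with h' | h'
        · exact h'
        · exfalso
          have hβa : β ≤ a := csInf_le hTb haT
          have hxT : x ∈ T := ⟨h'.symm, hx.1.le, le_trans hx.2.le hβa⟩
          exact absurd (csInf_le hTb hxT) (not_le.mpr hx.2)
      exact core b β hbβ hpos' (Or.inr hβ0)
  -- global structure: log u is a concave parabola
  have hrg : ∀ x, HasDerivAt (fun y => deriv u y / u y + lam * y) 0 x := by
    intro x
    have h1 : HasDerivAt (fun y : ℝ => lam * y) lam x := by
      simpa using (hasDerivAt_id x).const_mul lam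
    have := (hq x (hpos x).ne').add h1
    simp at this ⊢; exact this
  obtain ⟨C, hCdef⟩ : ∃ C, C = deriv u 0 / u 0 := ⟨_, rfl⟩
  have hqf : ∀ x, deriv u x / u x = C - lam * x := by
    intro x
    have h := is_const_of_deriv_eq_zero (f := fun y => deriv u y / u y + lam * y)
      (fun y => (hrg y).differentiableAt) (fun y => (hrg y).deriv) x 0
    rw [hCdef]
    linarith
  have hDd : ∀ x, HasDerivAt (fun y => Real.log (u y) - (C * y - lam * y ^ 2 / 2)) 0 x := by
    intro x
    have := (hvd x (hpos x).ne').sub (hquadd C x)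
    rw [hqf x] at this
    simp at this ⊢; exact this
  obtain ⟨K, hKdef⟩ : ∃ K, K = Real.log (u 0) := ⟨_, rfl⟩
  have hvf : ∀ x, Real.log (u x) = K + (C * x - lam * x ^ 2 / 2) := by
    intro x
    have h := is_const_of_deriv_eq_zero
      (f := fun y => Real.log (u y) - (C * y - lam * y ^ 2 / 2))
      (fun y => (hDd y).differentiableAt) (fun y => (hDd y).deriv) x 0
    rw [hKdef]
    linarith
  -- pin down the constants using E = 0 at x = 0
  have hK : C ^ 2 = lam - 2 * lam * K := by
    have h3 := hE0 0
    have hu0 : u 0 ≠ 0 := (hpos 0).ne'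
    have hC2 : C ^ 2 * (u 0) ^ 2 = (deriv u 0) ^ 2 := by
      rw [hCdef]
      field_simp
    have hKlog : Real.log (u 0) = K := hKdef.symm
    have h4 : C ^ 2 * (u 0) ^ 2 = (lam - 2 * lam * K) * (u 0) ^ 2 := by
      rw [hC2, h3, hKlog]
      ring
    have hu2 : (u 0) ^ 2 ≠ 0 := pow_ne_zero 2 hu0
    exact mul_right_cancel₀ hu2 h4
  refine ⟨C / lam, fun x => ?_⟩
  rw [← Real.exp_log (hpos x), hvf x]
  congr 1
  have hlam' : lam ≠ 0 := hlam.ne'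
  field_simp
  linear_combination hK
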